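/- arXiv:2510.11226 — 2 statements merged into one kernel-verified Lean document; each statement's English description precedes it below -/
import Mathlib

section
/- Let (M, dist) be a metric space, let R ≥ 0 and let c > 0 be a real number. For a finite set x ⊆ M define the Geyer saturation statistic G(x) = Σ_{w ∈ x} min( s(w, x, R), c ), where s(w, x, R) = card{ v ∈ x ∖ {w} : dist(w, v) ≤ R }. Let u ∈ M and let x, x' be finite subsets of M with u ∉ x, u ∉ x', and x ∩ B̄(u, 2R) = x' ∩ B̄(u, 2R), where B̄(u, 2R) is the closed ball of radius 2R centered at u. Then G(insert u x) − G(x) = G(insert u x') − G(x'); that is, the local contribution of a new point u to the Geyer saturation statistic depends only on the configuration within distance 2R of u, so the Geyer saturation interaction has finite range 2R. -/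
open scoped Classical

/-- Neighbor count `s(u, x, R)`: the number of points of `x ∖ {u}` within distance `R` of `u`. -/
noncomputable def nbr {M : Type*} [MetricSpace M] (u : M) (x : Finset M) (R : ℝ) : ℕ :=
  ((x.erase u).filter fun v => dist u v ≤ R).card

/-- Geyer saturation statistic `G(x) = ∑_{w ∈ x} min( s(w, x, R), c )`. -/
noncomputable def geyer {M : Type*} [MetricSpace M] (x : Finset M) (R c : ℝ) : ℝ :=
  ∑ w ∈ x, min (nbr w x R : ℝ) c

section Aux

variable {M : Type*} [MetricSpace M] (R c : ℝ) (u : M)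

lemma nbr_insert_of_le {w : M} {x : Finset M} (hwu : w ≠ u) (hux : u ∉ x)
    (hd : dist w u ≤ R) : nbr w (insert u x) R = nbr w x R + 1 := by
  unfold nbr
  rw [Finset.erase_insert_of_ne (Ne.symm hwu), Finset.filter_insert, if_pos hd,
    Finset.card_insert_of_notMem]
  intro hu
  exact hux (Finset.mem_of_mem_erase (Finset.mem_of_mem_filter u hu))

lemma nbr_insert_of_gt {w : M} {x : Finset M} (hwu : w ≠ u)
    (hd : ¬ dist w u ≤ R) : nbr w (insert u x) R = nbr w x R := by
  unfold nbr
  rw [Finset.erase_insert_of_ne (Ne.symm hwu), Finset.filter_insert, if_neg hd]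

/-- For `w` within distance `R` of `u`, the neighbour count only sees the ball `B̄(u, 2R)`. -/
lemma nbr_filter_ball {w : M} {x : Finset M} (hd : dist u w ≤ R) :
    nbr w (x.filter (fun v => v ∈ Metric.closedBall u (2 * R))) R = nbr w x R := by
  unfold nbr
  congr 1
  ext v
  simp only [Finset.mem_filter, Finset.mem_erase, Metric.mem_closedBall]
  constructor
  · rintro ⟨⟨hne, hv, _⟩, h2⟩
    exact ⟨⟨hne, hv⟩, h2⟩
  · rintro ⟨⟨hne, hv⟩, h2⟩
    refine ⟨⟨hne, hv, ?_⟩, h2⟩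
    rw [dist_comm]
    calc dist u v ≤ dist u w + dist w v := dist_triangle u w v
      _ ≤ 2 * R := by linarith

/-- The key computation: the local contribution of `u` depends only on
`x ∩ B̄(u, 2R)`. -/
lemma geyer_diff (hR : 0 ≤ R) {x : Finset M} (hux : u ∉ x) :
    geyer (insert u x) R c - geyer x R c =
      min ((nbr u (x.filter (fun v => v ∈ Metric.closedBall u (2 * R))) R : ℝ)) c +
        ∑ w ∈ (x.filter (fun v => v ∈ Metric.closedBall u (2 * R))).filter
            (fun w => dist u w ≤ R),
          (min ((nbr w (x.filter (fun v => v ∈ Metric.closedBall u (2 * R))) R : ℝ) + 1) c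
            - min ((nbr w (x.filter (fun v => v ∈ Metric.closedBall u (2 * R))) R : ℝ)) c) := by
  set y := x.filter (fun v => v ∈ Metric.closedBall u (2 * R)) with hy
  have hfil : y.filter (fun w => dist u w ≤ R) = x.filter (fun w => dist u w ≤ R) := by
    rw [hy, Finset.filter_filter]
    apply Finset.filter_congr
    intro v hv
    simp only [Metric.mem_closedBall]
    constructor
    · rintro ⟨_, h2⟩; exact h2
    · intro h2; exact ⟨by rw [dist_comm]; linarith, h2⟩
  have hu0 : nbr u y R = nbr u x R := by
    unfold nbr
    congr 1
    ext v
    simp only [hy, Finset.mem_filter, Finset.mem_erase, Metric.mem_closedBall]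
    constructor
    · rintro ⟨⟨hne, hv, _⟩, h2⟩; exact ⟨⟨hne, hv⟩, h2⟩
    · rintro ⟨⟨hne, hv⟩, h2⟩; exact ⟨⟨hne, hv, by rw [dist_comm]; linarith⟩, h2⟩
  have huin : nbr u (insert u x) R = nbr u x R := by
    unfold nbr; rw [Finset.erase_insert hux, Finset.erase_eq_of_notMem hux]
  rw [geyer, geyer, Finset.sum_insert hux, huin, ← hu0, add_sub_assoc, ← Finset.sum_sub_distrib]
  congr 1
  rw [hfil]
  rw [← Finset.sum_filter_of_ne (p := fun w => dist u w ≤ R)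
    (f := fun w => min ((nbr w (insert u x) R : ℝ)) c - min ((nbr w x R : ℝ)) c)]
  · apply Finset.sum_congr rfl
    intro w hw
    simp only [Finset.mem_filter] at hw
    have hwu : w ≠ u := fun e => hux (e ▸ hw.1)
    rw [nbr_insert_of_le R u hwu hux (dist_comm w u ▸ hw.2),
      nbr_filter_ball R u hw.2, Nat.cast_add, Nat.cast_one]
  · intro w hw hne
    by_contra hd
    have hwu : w ≠ u := fun e => hux (e ▸ hw)
    rw [nbr_insert_of_gt R u hwu (fun hle => hd (dist_comm u w ▸ hle)), sub_self] at hne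
    exact hne rfl

end Aux

/-- If two finite configurations `x, x'` (not containing `u`) agree on the closed ball
`B̄(u, 2R)`, then the local contribution of `u` to the Geyer saturation statistic is the
same for both: `G(insert u x) − G(x) = G(insert u x') − G(x')`; i.e. the Geyer saturation
interaction has finite range `2R`. -/
theorem stmt_13 {M : Type*} [MetricSpace M] (R c : ℝ) (hR : 0 ≤ R) (hc : 0 < c) (u : M)
    (x x' : Finset M) (hux : u ∉ x) (hux' : u ∉ x')
    (h : x.filter (fun v => v ∈ Metric.closedBall u (2 * R)) =
         x'.filter (fun v => v ∈ Metric.closedBall u (2 * R))) :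
    geyer (insert u x) R c - geyer x R c = geyer (insert u x') R c - geyer x' R c := by
  rw [geyer_diff R c u hR hux, geyer_diff R c u hR hux', h]
end

section
/- Let (M, dist) be a metric space, R ≥ 0, c > 0. For finite sets x, y ⊆ M define the cross Geyer saturation statistic v(x, y) = Σ_{w ∈ x} min( s(w, y, R), c ), where s(w, y, R) = card{ v ∈ y ∖ {w} : dist(w, v) ≤ R }. Then for all finite x, y ⊆ M and u ∉ x ∪ y: (i) v(insert u x, y) − v(x, y) = min( s(u, y, R), c ), so in particular 0 ≤ v(insert u x, y) − v(x, y) ≤ c; and (ii) 0 ≤ v(x, insert u y) − v(x, y) ≤ card( x ∩ B̄(u, R) ), where B̄(u, R) is the closed ball of radius R centered at u. -/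
open scoped Classical

/-- Cross Geyer saturation statistic `v(x, y) = ∑_{w ∈ x} min( s(w, y, R), c )`. -/
noncomputable def crossGeyer {M : Type*} [MetricSpace M] (x y : Finset M) (R c : ℝ) : ℝ :=
  ∑ w ∈ x, min (nbr w y R : ℝ) c

lemma nbr_insert {M : Type*} [MetricSpace M] (w u : M) (y : Finset M) (R : ℝ)
    (hwu : w ≠ u) (huy : u ∉ y) :
    nbr w (insert u y) R = nbr w y R + (if dist w u ≤ R then 1 else 0) := by
  unfold nbr
  rw [Finset.erase_insert_of_ne (by exact fun h => hwu h.symm), Finset.filter_insert]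
  split_ifs with h
  · rw [Finset.card_insert_of_notMem (by
      intro hmem
      exact huy (Finset.mem_of_mem_erase (Finset.mem_of_mem_filter _ hmem)))]
  · simp

/-- Local contributions of a new point `u ∉ x ∪ y` to the cross Geyer saturation statistic:
(i) adding `u` to the first pattern contributes exactly `min(s(u, y, R), c)`, hence a value
in `[0, c]`; (ii) adding `u` to the second pattern contributes a nonnegative amount bounded
by the number of points of `x` in the closed ball `B̄(u, R)`. -/
theorem stmt_14 {M : Type*} [MetricSpace M] (R c : ℝ) (hR : 0 ≤ R) (hc : 0 < c)
    (x y : Finset M) (u : M) (hu : u ∉ x ∪ y) :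
    (crossGeyer (insert u x) y R c - crossGeyer x y R c = min (nbr u y R : ℝ) c ∧
     0 ≤ crossGeyer (insert u x) y R c - crossGeyer x y R c ∧
     crossGeyer (insert u x) y R c - crossGeyer x y R c ≤ c) ∧
    (0 ≤ crossGeyer x (insert u y) R c - crossGeyer x y R c ∧
     crossGeyer x (insert u y) R c - crossGeyer x y R c ≤
       ((x.filter fun v => v ∈ Metric.closedBall u R).card : ℝ)) := by
  rw [Finset.mem_union] at hu
  push_neg at hu
  obtain ⟨hux, huy⟩ := hu
  have heq : crossGeyer (insert u x) y R c - crossGeyer x y R c = min (nbr u y R : ℝ) c := by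
    unfold crossGeyer
    rw [Finset.sum_insert hux]
    ring
  refine ⟨⟨heq, ?_, ?_⟩, ?_⟩
  · rw [heq]; exact le_min (by positivity) hc.le
  · rw [heq]; exact min_le_right _ _
  · have hdiff : crossGeyer x (insert u y) R c - crossGeyer x y R c =
        ∑ w ∈ x, (min (nbr w (insert u y) R : ℝ) c - min (nbr w y R : ℝ) c) := by
      unfold crossGeyer; rw [Finset.sum_sub_distrib]
    constructor
    · rw [hdiff]
      apply Finset.sum_nonneg
      intro w hw
      have : nbr w y R ≤ nbr w (insert u y) R := by
        rw [nbr_insert w u y R (fun h => hux (h ▸ hw)) huy]; omega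
      have := min_le_min (α := ℝ) (Nat.cast_le.mpr this) (le_refl c)
      linarith
    · rw [hdiff]
      have hcard : ((x.filter fun v => v ∈ Metric.closedBall u R).card : ℝ) =
          ∑ w ∈ x, (if dist w u ≤ R then (1 : ℝ) else 0) := by
        simp [Finset.sum_boole, Metric.mem_closedBall]
      rw [hcard]
      apply Finset.sum_le_sum
      intro w hw
      rw [nbr_insert w u y R (fun h => hux (h ▸ hw)) huy]
      split_ifs with h
      · push_cast
        rcases le_or_gt ((nbr w y R : ℝ) + 1) c with h1 | h1
        · rw [min_eq_left h1, min_eq_left (by linarith)]; linarith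
        · rw [min_eq_right h1.le]
          rcases le_total (nbr w y R : ℝ) c with h2 | h2
          · rw [min_eq_left h2]; linarith
          · rw [min_eq_right h2]; linarith
      · simp
end
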